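/- Let G be a unicycle graph whose unique cycle has odd length 2q+1 ≥ 5. Then Ψ(G) is a greedoid on V(G) if and only if for every S ∈ Ψ(G) the subgraph induced by N[S] is a König–Egerváry graph. -/

import Mathlib

open Finset

variable {V : Type*}

/-- A stable (independent) set of vertices. -/
def StableSet (G : SimpleGraph V) (S : Finset V) : Prop :=
  ∀ x ∈ S, ∀ y ∈ S, ¬ G.Adj x y

/-- The closed neighborhood N[S] of a finite vertex set. -/
def closedNbhd [Fintype V] [DecidableEq V] (G : SimpleGraph V) [DecidableRel G.Adj]
    (S : Finset V) : Finset V :=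
  S ∪ Finset.univ.filter (fun v => ∃ s ∈ S, G.Adj v s)

/-- Ψ(G): the family of local maximum stable sets of `G`:
stable sets `S` that are maximum stable sets of the subgraph induced by `N[S]`. -/
def Psi [Fintype V] [DecidableEq V] (G : SimpleGraph V) [DecidableRel G.Adj] :
    Set (Finset V) :=
  {S | StableSet G S ∧
    ∀ T : Finset V, T ⊆ closedNbhd G S → StableSet G T → T.card ≤ S.card}

/-- A maximum stable set of `G`. -/
def MaximumStable (G : SimpleGraph V) (S : Finset V) : Prop :=
  StableSet G S ∧ ∀ T : Finset V, StableSet G T → T.card ≤ S.card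

/-- The accessibility property of a set system. -/
def Accessible [DecidableEq V] (F : Set (Finset V)) : Prop :=
  ∀ X ∈ F, X.Nonempty → ∃ x ∈ X, X.erase x ∈ F

/-- The exchange property of a set system. -/
def ExchangeProp [DecidableEq V] (F : Set (Finset V)) : Prop :=
  ∀ X ∈ F, ∀ Y ∈ F, X.card = Y.card + 1 → ∃ x ∈ X, x ∉ Y ∧ insert x Y ∈ F

/-- A greedoid: a nonempty set system satisfying accessibility and exchange. -/
def IsGreedoid [DecidableEq V] (F : Set (Finset V)) : Prop :=
  F.Nonempty ∧ Accessible F ∧ ExchangeProp F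

/-- An accessibility chain for `S`: sets `f 1 ⊆ f 2 ⊆ ... ⊆ f |S| = S`,
with `|f j| = j` and each `f j ∈ Ψ(G)`. -/
def HasAccessChain [Fintype V] [DecidableEq V] (G : SimpleGraph V) [DecidableRel G.Adj]
    (S : Finset V) : Prop :=
  ∃ f : ℕ → Finset V, f S.card = S ∧
    (∀ j, 1 ≤ j → j ≤ S.card → (f j).card = j ∧ f j ∈ Psi G) ∧
    (∀ j, 1 ≤ j → j < S.card → f j ⊆ f (j + 1))

/-- A matching `M` is uniquely restricted if it is the unique perfect matching of the
subgraph induced by the set of vertices it saturates. -/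
def UniquelyRestricted (G : SimpleGraph V) (M : G.Subgraph) : Prop :=
  M.IsMatching ∧ ∀ M' : G.Subgraph, M'.IsMatching → M'.support = M.support →
    M'.edgeSet = M.edgeSet

/-- A maximum matching: a matching of maximum cardinality. -/
def MaximumMatching (G : SimpleGraph V) (M : G.Subgraph) : Prop :=
  M.IsMatching ∧ ∀ M' : G.Subgraph, M'.IsMatching → M'.edgeSet.ncard ≤ M.edgeSet.ncard

/-- A cycle `c` is alternating with respect to the matching `M` if of any two incident
edges of `c` exactly one belongs to `M`. -/
def AlternatingCycle (G : SimpleGraph V) (M : G.Subgraph) {v : V} (c : G.Walk v v) : Prop :=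
  c.IsCycle ∧ ∀ i : Fin c.edges.length,
    (c.edges.get i ∈ M.edgeSet ↔
      c.edges.get ⟨(i.1 + 1) % c.edges.length,
        Nat.mod_lt _ (lt_of_le_of_lt (Nat.zero_le _) i.2)⟩ ∉ M.edgeSet)

/-- A unicyclic graph: it has a cycle, and all of its cycles have the same edge set. -/
def Unicyclic [DecidableEq V] (G : SimpleGraph V) : Prop :=
  (∃ (v : V) (c : G.Walk v v), c.IsCycle) ∧
  ∀ ⦃v : V⦄ (c : G.Walk v v) ⦃w : V⦄ (d : G.Walk w w), c.IsCycle → d.IsCycle →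
    c.edges.toFinset = d.edges.toFinset

/-- The stability number α(G). -/
noncomputable def alphaNum (G : SimpleGraph V) : ℕ :=
  sSup {n | ∃ S : Finset V, StableSet G S ∧ S.card = n}

/-- The matching number μ(G). -/
noncomputable def muNum (G : SimpleGraph V) : ℕ :=
  sSup {n | ∃ M : G.Subgraph, M.IsMatching ∧ M.edgeSet.ncard = n}

/-- A König–Egerváry graph: α(G) + μ(G) = |V(G)|. -/
def KonigEgervary (G : SimpleGraph V) [Fintype V] : Prop :=
  alphaNum G + muNum G = Fintype.card V


set_option linter.unusedSectionVars false
set_option maxHeartbeats 1000000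

section Aux

variable [Fintype V] [DecidableEq V] (G : SimpleGraph V) [DecidableRel G.Adj]

lemma mem_closedNbhd {S : Finset V} {v : V} :
    v ∈ closedNbhd G S ↔ v ∈ S ∨ ∃ s ∈ S, G.Adj v s := by
  simp [closedNbhd]

lemma subset_closedNbhd (S : Finset V) : S ⊆ closedNbhd G S :=
  Finset.subset_union_left

lemma closedNbhd_mono {S T : Finset V} (h : S ⊆ T) :
    closedNbhd G S ⊆ closedNbhd G T := by
  intro v hv
  rw [mem_closedNbhd] at hv ⊢
  rcases hv with hv | ⟨s, hs, hadj⟩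
  · exact Or.inl (h hv)
  · exact Or.inr ⟨s, h hs, hadj⟩

/-- A "matching function": an injective map sending each vertex of `N[S] \ S`
to an adjacent vertex of `S`. -/
def MatchProp (S : Finset V) : Prop :=
  ∃ f : V → V, Set.InjOn f ↑(closedNbhd G S \ S) ∧
    ∀ u ∈ closedNbhd G S \ S, f u ∈ S ∧ G.Adj u (f u)

lemma card_le_of_match {S T : Finset V} (hM : MatchProp G S)
    (hT : T ⊆ closedNbhd G S) (hTs : StableSet G T) : T.card ≤ S.card := by
  obtain ⟨f, hinj, hf⟩ := hM
  have hmap : ∀ t ∈ T, (if t ∈ S then t else f t) ∈ S := by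
    intro t ht
    by_cases h : t ∈ S
    · simpa [h]
    · have htd : t ∈ closedNbhd G S \ S := Finset.mem_sdiff.2 ⟨hT ht, h⟩
      simpa [h] using (hf t htd).1
  refine Finset.card_le_card_of_injOn _ hmap ?_
  intro a ha b hb hab
  simp only [Finset.mem_coe] at ha hb
  by_cases haS : a ∈ S <;> by_cases hbS : b ∈ S
  · simpa [haS, hbS] using hab
  · -- a ∈ S, b ∉ S : a = f b, but f b is adjacent to b, both in T: contradiction
    exfalso
    have hbd : b ∈ closedNbhd G S \ S := Finset.mem_sdiff.2 ⟨hT hb, hbS⟩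
    have : a = f b := by simpa [haS, hbS] using hab
    exact hTs b hb a ha (this ▸ (hf b hbd).2)
  · exfalso
    have had : a ∈ closedNbhd G S \ S := Finset.mem_sdiff.2 ⟨hT ha, haS⟩
    have : f a = b := by simpa [haS, hbS] using hab
    exact hTs a ha b hb (this ▸ (hf a had).2)
  · have had : a ∈ closedNbhd G S \ S := Finset.mem_sdiff.2 ⟨hT ha, haS⟩
    have hbd : b ∈ closedNbhd G S \ S := Finset.mem_sdiff.2 ⟨hT hb, hbS⟩
    have : f a = f b := by simpa [haS, hbS] using hab
    exact hinj (Finset.mem_coe.2 had) (Finset.mem_coe.2 hbd) this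

lemma mem_psi_of_match {S : Finset V} (hS : StableSet G S) (hM : MatchProp G S) :
    S ∈ Psi G :=
  ⟨hS, fun T hT hTs => card_le_of_match G hM hT hTs⟩

lemma empty_mem_psi : (∅ : Finset V) ∈ Psi G := by
  refine ⟨fun x hx => absurd hx (by simp), ?_⟩
  intro T hT _
  have : T = ∅ := by
    have : closedNbhd G ∅ = ∅ := by simp [closedNbhd]
    simpa [this, Finset.subset_empty] using hT
  simp [this]

end Aux



section Walks
variable (G : SimpleGraph V)

lemma exists_walk_chain (w : ℕ → V) :
    ∀ (n : ℕ), (∀ k, k < n → G.Adj (w k) (w (k+1))) →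
    ∃ p : G.Walk (w 0) (w n), p.length = n ∧
      p.support = (List.range (n+1)).map w ∧
      p.edges = (List.range n).map (fun k => s(w k, w (k+1))) := by
  intro n
  induction n with
  | zero =>
    intro _
    refine ⟨SimpleGraph.Walk.nil, by simp, by simp [List.range_succ], by simp⟩
  | succ n ih =>
    intro hadj
    obtain ⟨p, hl, hs, he⟩ := ih (fun k hk => hadj k (by omega))
    refine ⟨p.concat (hadj n (by omega)), ?_, ?_, ?_⟩
    · rw [SimpleGraph.Walk.length_concat, hl]
    · rw [SimpleGraph.Walk.support_concat, hs]
      simp [List.range_succ]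
    · rw [SimpleGraph.Walk.edges_concat, he, List.range_succ]
      simp

lemma no_even_closed_chain
    (hodd : ∀ ⦃v : V⦄ (c : G.Walk v v), c.IsCycle → ¬ Even c.length)
    (A B : Set V) (hdisj : ∀ a ∈ A, ∀ b ∈ B, a ≠ b)
    (m : ℕ) (hm : 2 ≤ m) (u s : ℕ → V)
    (hu : ∀ k, k < m → u k ∈ A) (hs : ∀ k, k < m → s k ∈ B)
    (ha1 : ∀ k, k < m → G.Adj (u k) (s k))
    (ha2 : ∀ k, k < m → G.Adj (s k) (u (k+1)))
    (hclose : u m = u 0)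
    (huinj : ∀ k l, k < m → l < m → u k = u l → k = l)
    (hsinj : ∀ k l, k < m → l < m → s k = s l → k = l) : False := by
  classical
  set w : ℕ → V := fun i => if i % 2 = 0 then u (i/2) else s (i/2) with hw
  have wE : ∀ i, w (2*i) = u i := by
    intro i
    simp only [hw]
    rw [if_pos (by omega)]
    congr 1
    omega
  have wO : ∀ i, w (2*i+1) = s i := by
    intro i
    simp only [hw]
    rw [if_neg (by omega)]
    congr 1
    omega
  have huA : ∀ t, t ≤ m → u t ∈ A := by
    intro t ht
    rcases eq_or_lt_of_le ht with h | h
    · subst h; rw [hclose]; exact hu 0 (by omega)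
    · exact hu t h
  have hadj : ∀ k, k < 2*m → G.Adj (w k) (w (k+1)) := by
    intro k hk
    rcases Nat.even_or_odd k with ⟨t, ht⟩ | ⟨t, ht⟩
    · have e1 : k = 2*t := by omega
      have e2 : w k = u t := by rw [e1, wE]
      have e3 : w (k+1) = s t := by rw [show k+1 = 2*t+1 by omega, wO]
      rw [e2, e3]
      exact ha1 t (by omega)
    · have e1 : k = 2*t+1 := by omega
      have e2 : w k = s t := by rw [e1, wO]
      have e3 : w (k+1) = u (t+1) := by rw [show k+1 = 2*(t+1) by omega, wE]
      rw [e2, e3]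
      exact ha2 t (by omega)
  obtain ⟨p, hl, hsup, hedg⟩ := exists_walk_chain G w (2*m) hadj
  have hcl : w (2*m) = w 0 := by
    have h1 : w (2*m) = u m := wE m
    have h2 : w 0 = u 0 := by simpa using wE 0
    rw [h1, h2, hclose]
  let c : G.Walk (w 0) (w 0) := p.copy rfl hcl
  have hclen : c.length = 2*m := by
    simp only [c, SimpleGraph.Walk.length_copy, hl]
  -- edge injectivity
  have edgeinj : ∀ i ∈ List.range (2*m), ∀ j ∈ List.range (2*m),
      s(w i, w (i+1)) = s(w j, w (j+1)) → i = j := by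
    intro i hi j hj hij
    rw [List.mem_range] at hi hj
    rcases Nat.even_or_odd i with ⟨t, ht⟩ | ⟨t, ht⟩ <;>
      rcases Nat.even_or_odd j with ⟨r, hr⟩ | ⟨r, hr⟩
    · -- both even
      have htm : t < m := by omega
      have hrm : r < m := by omega
      rw [show i = 2*t by omega, show (2*t)+1 = 2*t+1 by omega, wE, wO,
        show j = 2*r by omega, show (2*r)+1 = 2*r+1 by omega, wE, wO,
        Sym2.eq_iff] at hij
      rcases hij with ⟨h1, _⟩ | ⟨h1, h2⟩
      · have := huinj t r htm hrm h1; omega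
      · exact absurd h1 (hdisj _ (hu t htm) _ (hs r hrm))
    · -- i even, j odd
      have htm : t < m := by omega
      have hrm : r < m := by omega
      rw [show i = 2*t by omega, show (2*t)+1 = 2*t+1 by omega, wE, wO,
        show j = 2*r+1 by omega, show (2*r+1)+1 = 2*(r+1) by omega, wO, wE,
        Sym2.eq_iff] at hij
      rcases hij with ⟨h1, _⟩ | ⟨h1, h2⟩
      · exact absurd h1 (hdisj _ (hu t htm) _ (hs r hrm))
      · -- u t = u (r+1) and s t = s r
        have htr : t = r := hsinj t r htm hrm h2
        subst htr
        rcases eq_or_lt_of_le (show t+1 ≤ m by omega) with h | h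
        · -- t+1 = m : u t = u m = u 0
          rw [← h] at hclose
          rw [hclose] at h1
          have := huinj t 0 htm (by omega) h1
          omega
        · have := huinj t (t+1) htm h h1
          omega
    · -- i odd, j even : symmetric
      have htm : t < m := by omega
      have hrm : r < m := by omega
      rw [show i = 2*t+1 by omega, show (2*t+1)+1 = 2*(t+1) by omega, wO, wE,
        show j = 2*r by omega, show (2*r)+1 = 2*r+1 by omega, wE, wO,
        Sym2.eq_iff] at hij
      rcases hij with ⟨h1, h2⟩ | ⟨h1, h2⟩
      · exact absurd h1.symm (hdisj _ (hu r hrm) _ (hs t htm))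
      · have htr : t = r := hsinj t r htm hrm h1
        subst htr
        rcases eq_or_lt_of_le (show t+1 ≤ m by omega) with h | h
        · rw [← h] at hclose
          rw [hclose] at h2
          have := huinj 0 t (by omega) htm h2
          omega
        · have := huinj (t+1) t h htm h2
          omega
    · -- both odd
      have htm : t < m := by omega
      have hrm : r < m := by omega
      rw [show i = 2*t+1 by omega, show (2*t+1)+1 = 2*(t+1) by omega, wO, wE,
        show j = 2*r+1 by omega, show (2*r+1)+1 = 2*(r+1) by omega, wO, wE,
        Sym2.eq_iff] at hij
      rcases hij with ⟨h1, _⟩ | ⟨h1, h2⟩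
      · have := hsinj t r htm hrm h1; omega
      · exact absurd h1.symm (hdisj _ (huA (r+1) (by omega)) _ (hs t htm))
  have htrail : c.IsTrail := by
    rw [SimpleGraph.Walk.isTrail_def]
    have : c.edges = (List.range (2*m)).map (fun k => s(w k, w (k+1))) := by
      simp only [c, SimpleGraph.Walk.edges_copy, hedg]
    rw [this]
    exact List.Nodup.map_on edgeinj (List.nodup_range)
  -- support tail nodup
  have tailinj : ∀ i ∈ List.range (2*m), ∀ j ∈ List.range (2*m),
      w (i+1) = w (j+1) → i = j := by
    intro i hi j hj hij
    rw [List.mem_range] at hi hj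
    rcases Nat.even_or_odd (i+1) with ⟨t, ht⟩ | ⟨t, ht⟩ <;>
      rcases Nat.even_or_odd (j+1) with ⟨r, hr⟩ | ⟨r, hr⟩
    · -- both even : u t = u r with 1 ≤ t,r ≤ m
      have h1t : 1 ≤ t := by omega
      have htm : t ≤ m := by omega
      have h1r : 1 ≤ r := by omega
      have hrm : r ≤ m := by omega
      rw [show i+1 = 2*t by omega, show j+1 = 2*r by omega, wE, wE] at hij
      rcases eq_or_lt_of_le htm with he | hlt
      · rcases eq_or_lt_of_le hrm with he2 | hlt2
        · omega
        · subst he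
          rw [hclose] at hij
          have := huinj 0 r (by omega) hlt2 hij
          omega
      · rcases eq_or_lt_of_le hrm with he2 | hlt2
        · subst he2
          rw [hclose] at hij
          have := huinj t 0 hlt (by omega) hij
          omega
        · have := huinj t r hlt hlt2 hij
          omega
    · have htm : t ≤ m := by omega
      have hrm : r < m := by omega
      rw [show i+1 = 2*t by omega, show j+1 = 2*r+1 by omega, wE, wO] at hij
      exact absurd hij (hdisj _ (huA t htm) _ (hs r hrm))
    · have htm : t < m := by omega
      have hrm : r ≤ m := by omega
      rw [show i+1 = 2*t+1 by omega, show j+1 = 2*r by omega, wO, wE] at hij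
      exact absurd hij.symm (hdisj _ (huA r hrm) _ (hs t htm))
    · have htm : t < m := by omega
      have hrm : r < m := by omega
      rw [show i+1 = 2*t+1 by omega, show j+1 = 2*r+1 by omega, wO, wO] at hij
      have := hsinj t r htm hrm hij
      omega
  have htail : c.support.tail.Nodup := by
    have hcs : c.support = (List.range (2*m+1)).map w := by
      simp only [c, SimpleGraph.Walk.support_copy, hsup]
    rw [hcs, List.range_succ_eq_map]
    simp only [List.map_cons, List.tail_cons, List.map_map]
    exact List.Nodup.map_on (by
      intro x hx y hy hxy
      exact tailinj x hx y hy hxy) (List.nodup_range)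
  have hne : c ≠ SimpleGraph.Walk.nil := by
    intro h
    rw [h] at hclen
    simp at hclen
    omega
  have hcyc : c.IsCycle := by
    rw [SimpleGraph.Walk.isCycle_def]
    exact ⟨htrail, hne, htail⟩
  have := hodd c hcyc
  rw [hclen] at this
  exact this ⟨m, by omega⟩

lemma triangle_cycle {x u v : V} (h1 : G.Adj u v) (h2 : G.Adj v x) (h3 : G.Adj x u) :
    ∃ (c : G.Walk u u), c.IsCycle ∧ c.length = 3 := by
  refine ⟨SimpleGraph.Walk.cons h1 (SimpleGraph.Walk.cons h2
    (SimpleGraph.Walk.cons h3 SimpleGraph.Walk.nil)), ?_, by simp⟩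
  rw [SimpleGraph.Walk.isCycle_def]
  refine ⟨?_, by simp, ?_⟩
  · rw [SimpleGraph.Walk.isTrail_def]
    simp only [SimpleGraph.Walk.edges_cons, SimpleGraph.Walk.edges_nil]
    have hne1 := h1.ne
    have hne2 := h2.ne
    have hne3 := h3.ne
    simp only [List.nodup_cons, List.mem_cons, List.mem_singleton, List.not_mem_nil,
      not_false_iff, List.nodup_nil, and_true, Sym2.eq_iff]
    push_neg
    refine ⟨⟨?_, ?_⟩, ?_⟩ <;> tauto
  · simp only [SimpleGraph.Walk.support_cons, SimpleGraph.Walk.support_nil,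
      List.tail_cons]
    have hne2 := h2.ne
    have hne3 := h3.ne
    have hne1 := h1.ne
    simp only [List.nodup_cons, List.mem_cons, List.mem_singleton, List.not_mem_nil,
      not_false_iff, List.nodup_nil, and_true]
    push_neg
    tauto
end Walks



section Chase
variable (G : SimpleGraph V)


lemma chase_contra [Fintype V]
    (hodd : ∀ ⦃v : V⦄ (c : G.Walk v v), c.IsCycle → ¬ Even c.length)
    (A B : Set V) (hdisj : ∀ a ∈ A, ∀ b ∈ B, a ≠ b)
    (useq mseq : ℕ → V)
    (hu : ∀ k, useq k ∈ A) (hms : ∀ k, mseq k ∈ B)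
    (h1 : ∀ k, G.Adj (useq k) (mseq k))
    (h2 : ∀ k, G.Adj (mseq k) (useq (k+1)))
    (hne : ∀ k, useq (k+1) ≠ useq k)
    (hdet : ∀ k l, mseq k = mseq l → useq (k+1) = useq (l+1)) : False := by
  classical
  have hex : ∃ n, ∃ i, i < n ∧ useq i = useq n := by
    obtain ⟨a, b, hab, heq⟩ := Finite.exists_ne_map_eq_of_infinite useq
    rcases lt_or_gt_of_ne hab with h | h
    · exact ⟨b, a, h, heq⟩
    · exact ⟨a, b, h, heq.symm⟩
  let j := Nat.find hex
  obtain ⟨i, hij, hiq⟩ : ∃ i, i < j ∧ useq i = useq j := Nat.find_spec hex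
  have hmin : ∀ n, n < j → ¬ ∃ i, i < n ∧ useq i = useq n := fun n hn => Nat.find_min hex hn
  set m := j - i with hmdef
  have hm1 : 1 ≤ m := by omega
  have hm : 2 ≤ m := by
    rcases eq_or_lt_of_le hm1 with h | h
    · exfalso
      have : j = i + 1 := by omega
      rw [this] at hiq
      exact hne i hiq.symm
    · omega
  have huinj : ∀ k l, k < m → l < m → useq (i+k) = useq (i+l) → k = l := by
    intro k l hk hl heq
    by_contra hkl
    rcases lt_or_gt_of_ne hkl with h | h
    · exact hmin (i+l) (by omega) ⟨i+k, by omega, heq⟩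
    · exact hmin (i+k) (by omega) ⟨i+l, by omega, heq.symm⟩
  refine no_even_closed_chain G hodd A B hdisj m hm
    (fun k => useq (i+k)) (fun k => mseq (i+k))
    (fun k _ => hu _) (fun k _ => hms _) (fun k _ => h1 _)
    (fun k _ => h2 _) ?_ huinj ?_
  · show useq (i + m) = useq (i + 0)
    rw [show i + m = j by omega, show i + 0 = i from rfl]
    exact hiq.symm
  · intro k l hk hl heq
    have hd := hdet (i+k) (i+l) heq
    have hk1 : k + 1 ≤ m := by omega
    have hl1 : l + 1 ≤ m := by omega
    rcases eq_or_lt_of_le hk1 with ek | ek <;> rcases eq_or_lt_of_le hl1 with el | el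
    · omega
    · exfalso
      rw [show i + k + 1 = j by omega] at hd
      exact hmin (i + l + 1) (by omega) ⟨i, by omega, hiq.trans hd⟩
    · exfalso
      rw [show i + l + 1 = j by omega] at hd
      exact hmin (i + k + 1) (by omega) ⟨i, by omega, hiq.trans hd.symm⟩
    · have := huinj (k+1) (l+1) ek el hd
      omega
end Chase

set_option linter.unusedSectionVars false


section Access
variable [Fintype V] [DecidableEq V] (G : SimpleGraph V) [DecidableRel G.Adj]

lemma stableSet_mono {S T : Finset V} (h : T ⊆ S) (hS : StableSet G S) :
    StableSet G T := fun x hx y hy => hS x (h hx) y (h hy)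

lemma erase_match_case1 {X : Finset V} (hXs : StableSet G X)
    (f : V → V) (hinj : Set.InjOn f ↑(closedNbhd G X \ X))
    (hf : ∀ u ∈ closedNbhd G X \ X, f u ∈ X ∧ G.Adj u (f u))
    {x : V} (hx : x ∈ X) (hmiss : ∀ u ∈ closedNbhd G X \ X, f u ≠ x) :
    MatchProp G (X.erase x) := by
  have hsub : closedNbhd G (X.erase x) \ X.erase x ⊆ closedNbhd G X \ X := by
    intro u hu
    rw [Finset.mem_sdiff] at hu ⊢
    obtain ⟨hu1, hu2⟩ := hu
    have hunx : u ∉ X := by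
      intro huX
      have hux : u = x := by
        by_contra hne
        exact hu2 (Finset.mem_erase.2 ⟨hne, huX⟩)
      subst hux
      rw [mem_closedNbhd] at hu1
      rcases hu1 with h | ⟨s, hs, hadj⟩
      · exact hu2 h
      · exact hXs u huX s (Finset.mem_of_mem_erase hs) hadj
    exact ⟨closedNbhd_mono G (Finset.erase_subset x X) hu1, hunx⟩
  refine ⟨f, hinj.mono (by exact_mod_cast hsub), ?_⟩
  intro u hu
  have hu' := hsub hu
  exact ⟨Finset.mem_erase.2 ⟨hmiss u hu', (hf u hu').1⟩, (hf u hu').2⟩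

lemma erase_match_case2a {X : Finset V} (hXs : StableSet G X)
    (f : V → V) (hinj : Set.InjOn f ↑(closedNbhd G X \ X))
    (hf : ∀ u ∈ closedNbhd G X \ X, f u ∈ X ∧ G.Adj u (f u))
    {u : V} (hu : u ∈ closedNbhd G X \ X)
    (huniq : ∀ w ∈ X, G.Adj u w → w = f u) :
    MatchProp G (X.erase (f u)) := by
  have hsub : closedNbhd G (X.erase (f u)) \ X.erase (f u) ⊆
      (closedNbhd G X \ X) \ {u} := by
    intro t ht
    rw [Finset.mem_sdiff] at ht
    obtain ⟨ht1, ht2⟩ := ht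
    have htnu : t ≠ u := by
      intro h
      subst h
      rw [mem_closedNbhd] at ht1
      rcases ht1 with h | ⟨s, hs, hadj⟩
      · exact (Finset.mem_sdiff.1 hu).2 (Finset.mem_of_mem_erase h)
      · have := huniq s (Finset.mem_of_mem_erase hs) hadj
        subst this
        exact (Finset.mem_erase.1 hs).1 rfl
    have htnX : t ∉ X := by
      intro htX
      have htx : t = f u := by
        by_contra hne
        exact ht2 (Finset.mem_erase.2 ⟨hne, htX⟩)
      subst htx
      rw [mem_closedNbhd] at ht1
      rcases ht1 with h | ⟨s, hs, hadj⟩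
      · exact ht2 h
      · exact hXs _ htX s (Finset.mem_of_mem_erase hs) hadj
    refine Finset.mem_sdiff.2 ⟨Finset.mem_sdiff.2
      ⟨closedNbhd_mono G (Finset.erase_subset _ X) ht1, htnX⟩, by simpa using htnu⟩
  have hsub' : closedNbhd G (X.erase (f u)) \ X.erase (f u) ⊆ closedNbhd G X \ X :=
    fun t ht => (Finset.mem_sdiff.1 (hsub ht)).1
  refine ⟨f, hinj.mono (by exact_mod_cast hsub'), ?_⟩
  intro t ht
  have ht2 := hsub ht
  rw [Finset.mem_sdiff, Finset.mem_singleton] at ht2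
  refine ⟨Finset.mem_erase.2 ⟨?_, (hf t ht2.1).1⟩, (hf t ht2.1).2⟩
  intro h
  exact ht2.2 (hinj (by exact_mod_cast ht2.1) (by exact_mod_cast hu) h)

theorem psi_accessible
    (hodd : ∀ ⦃v : V⦄ (c : G.Walk v v), c.IsCycle → ¬ Even c.length)
    (hmatch : ∀ S ∈ Psi G, MatchProp G S) : Accessible (Psi G) := by
  classical
  intro X hX hXne
  obtain ⟨f, hinj, hf⟩ := hmatch X hX
  have hXs : StableSet G X := hX.1
  set D := closedNbhd G X \ X with hD
  by_cases hc1 : ∃ x ∈ X, ∀ u ∈ D, f u ≠ x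
  · obtain ⟨x, hx, hmiss⟩ := hc1
    exact ⟨x, hx, mem_psi_of_match G
      (stableSet_mono G (Finset.erase_subset x X) hXs)
      (erase_match_case1 G hXs f hinj hf hx hmiss)⟩
  · push_neg at hc1
    by_cases hc2 : ∃ u ∈ D, ∀ w ∈ X, G.Adj u w → w = f u
    · obtain ⟨u, hu, huniq⟩ := hc2
      exact ⟨f u, (hf u hu).1, mem_psi_of_match G
        (stableSet_mono G (Finset.erase_subset _ X) hXs)
        (erase_match_case2a G hXs f hinj hf hu huniq)⟩
    · exfalso
      push_neg at hc2
      -- every u ∈ D has a neighbour in X different from f u; f is onto X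
      have hpick : ∀ u ∈ D, ∃ w ∈ X, G.Adj u w ∧ w ≠ f u := by
        intro u hu
        obtain ⟨w, hw, hadj, hne⟩ := hc2 u hu
        exact ⟨w, hw, hadj, hne⟩
      let pick : V → V := fun u =>
        if h : ∃ w, w ∈ X ∧ G.Adj u w ∧ w ≠ f u then h.choose else u
      have hpick' : ∀ u ∈ D, pick u ∈ X ∧ G.Adj u (pick u) ∧ pick u ≠ f u := by
        intro u hu
        obtain ⟨w, hw, hadj, hne⟩ := hpick u hu
        have h : ∃ w, w ∈ X ∧ G.Adj u w ∧ w ≠ f u := ⟨w, hw, hadj, hne⟩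
        simp only [pick, dif_pos h]
        exact h.choose_spec
      let finv : V → V := fun x =>
        if h : ∃ u, u ∈ D ∧ f u = x then h.choose else x
      have hfinv : ∀ x ∈ X, finv x ∈ D ∧ f (finv x) = x := by
        intro x hx
        obtain ⟨u, hu, hfu⟩ := hc1 x hx
        have h : ∃ u, u ∈ D ∧ f u = x := ⟨u, hu, hfu⟩
        simp only [finv, dif_pos h]
        exact h.choose_spec
      obtain ⟨x₀, hx₀⟩ := hXne
      obtain ⟨hu₀D, hu₀f⟩ := hfinv x₀ hx₀
      let σ : V → V := fun u => finv (pick u)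
      let useq : ℕ → V := fun k => σ^[k] (finv x₀)
      have hstep : ∀ k, useq (k+1) = σ (useq k) := by
        intro k
        simp only [useq, Function.iterate_succ_apply']
      have hinv : ∀ k, useq k ∈ D := by
        intro k
        induction k with
        | zero => exact hu₀D
        | succ n ihn =>
          rw [hstep n]
          exact (hfinv (pick (useq n)) (hpick' _ ihn).1).1
      let mseq : ℕ → V := fun k => pick (useq k)
      have hmX : ∀ k, mseq k ∈ X := fun k => (hpick' _ (hinv k)).1
      have hsig : ∀ k, useq (k+1) = finv (mseq k) := fun k => hstep k
      have hfm : ∀ k, f (useq (k+1)) = mseq k := by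
        intro k
        rw [hsig k]
        exact (hfinv (mseq k) (hmX k)).2
      refine chase_contra G hodd ↑D ↑X ?_ useq mseq (fun k => hinv k) hmX
        (fun k => (hpick' _ (hinv k)).2.1) ?_ ?_ ?_
      · intro a ha b hb
        intro h
        subst h
        exact (Finset.mem_sdiff.1 ha).2 hb
      · intro k
        have h := (hf _ (hinv (k+1))).2
        rw [hfm k] at h
        exact h.symm
      · intro k heq
        have := hfm k
        rw [heq] at this
        exact (hpick' _ (hinv k)).2.2 this.symm
      · intro k l heq
        rw [hsig k, hsig l, heq]
end Access



section Exchange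
variable [Fintype V] [DecidableEq V] (G : SimpleGraph V) [DecidableRel G.Adj]

lemma not_adj_of_not_mem_closedNbhd {Y : Finset V} {x y : V}
    (hx : x ∉ closedNbhd G Y) (hy : y ∈ Y) : ¬ G.Adj x y := by
  intro h
  exact hx ((mem_closedNbhd G).2 (Or.inr ⟨y, hy, h⟩))

lemma stable_insert_of_not_mem_closedNbhd {Y : Finset V} {x : V}
    (hY : StableSet G Y) (hx : x ∉ closedNbhd G Y) :
    StableSet G (insert x Y) := by
  intro a ha b hb
  rw [Finset.mem_insert] at ha hb
  rcases ha with rfl | ha <;> rcases hb with rfl | hb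
  · exact G.loopless.irrefl _
  · exact not_adj_of_not_mem_closedNbhd G hx hb
  · intro h
    exact not_adj_of_not_mem_closedNbhd G hx ha h.symm
  · exact hY a ha b hb

theorem psi_exchange
    (hodd : ∀ ⦃v : V⦄ (c : G.Walk v v), c.IsCycle → ¬ Even c.length)
    (hmatch : ∀ S ∈ Psi G, MatchProp G S) : ExchangeProp (Psi G) := by
  classical
  intro X hX Y hY hcard
  obtain ⟨fX, hXinj, hfX⟩ := hmatch X hX
  obtain ⟨fY, hYinj, hfY⟩ := hmatch Y hY
  have hXs : StableSet G X := hX.1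
  have hYs : StableSet G Y := hY.1
  set DX := closedNbhd G X \ X with hDX
  set DY := closedNbhd G Y \ Y with hDY
  set NY := closedNbhd G Y with hNY
  -- X ∩ N[Y] has at most |Y| elements
  have hXNY : (X ∩ NY).card ≤ Y.card := by
    refine card_le_of_match G ⟨fY, hYinj, hfY⟩ (Finset.inter_subset_right) ?_
    exact stableSet_mono G (Finset.inter_subset_left) hXs
  set C := X \ NY with hC
  have hCne : C.Nonempty := by
    rw [← Finset.card_pos]
    have h1 := Finset.card_inter_add_card_sdiff X NY
    have h2 : C.card = (X \ NY).card := rfl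
    omega
  by_cases hgood : ∃ x ∈ C, ∀ u v : V, G.Adj x u → u ∉ NY → G.Adj x v → v ∉ NY → u = v
  · -- a good vertex: extend the matching
    obtain ⟨x, hxC, hx1⟩ := hgood
    rw [hC, Finset.mem_sdiff] at hxC
    obtain ⟨hxX, hxNY⟩ := hxC
    have hxY : x ∉ Y := fun h => hxNY (subset_closedNbhd G Y h)
    refine ⟨x, hxX, hxY, ?_⟩
    refine mem_psi_of_match G (stable_insert_of_not_mem_closedNbhd G hYs hxNY) ?_
    refine ⟨fun u => if u ∈ NY then fY u else x, ?_, ?_⟩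
    · intro a ha b hb hab
      replace hab : (if a ∈ NY then fY a else x) = (if b ∈ NY then fY b else x) := hab
      simp only [Finset.coe_sdiff, Set.mem_diff, Finset.mem_coe] at ha hb
      obtain ⟨ha1, ha2⟩ := ha
      obtain ⟨hb1, hb2⟩ := hb
      have hmem : ∀ t, t ∈ closedNbhd G (insert x Y) → t ∉ insert x Y → t ∉ NY →
          G.Adj t x := by
        intro t ht1 ht2 ht3
        rw [mem_closedNbhd] at ht1
        rcases ht1 with h | ⟨s, hs, hadj⟩
        · exact absurd h ht2
        · rw [Finset.mem_insert] at hs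
          rcases hs with rfl | hs
          · exact hadj
          · exact absurd ((mem_closedNbhd G).2 (Or.inr ⟨s, hs, hadj⟩)) ht3
      by_cases haN : a ∈ NY <;> by_cases hbN : b ∈ NY
      · have haD : a ∈ DY := Finset.mem_sdiff.2 ⟨haN, fun h => ha2 (Finset.mem_insert_of_mem h)⟩
        have hbD : b ∈ DY := Finset.mem_sdiff.2 ⟨hbN, fun h => hb2 (Finset.mem_insert_of_mem h)⟩
        rw [if_pos haN, if_pos hbN] at hab
        exact hYinj (by exact_mod_cast haD) (by exact_mod_cast hbD) hab
      · exfalso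
        rw [if_pos haN, if_neg hbN] at hab
        have haD : a ∈ DY := Finset.mem_sdiff.2 ⟨haN, fun h => ha2 (Finset.mem_insert_of_mem h)⟩
        exact hxNY (hab ▸ subset_closedNbhd G Y (hfY a haD).1)
      · exfalso
        rw [if_neg haN, if_pos hbN] at hab
        have hbD : b ∈ DY := Finset.mem_sdiff.2 ⟨hbN, fun h => hb2 (Finset.mem_insert_of_mem h)⟩
        exact hxNY (hab ▸ subset_closedNbhd G Y (hfY b hbD).1)
      · have hax : G.Adj a x := hmem a ha1 ha2 haN
        have hbx : G.Adj b x := hmem b hb1 hb2 hbN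
        exact hx1 a b hax.symm haN hbx.symm hbN
    · intro u hu
      rw [Finset.mem_sdiff] at hu
      obtain ⟨hu1, hu2⟩ := hu
      show (if u ∈ NY then fY u else x) ∈ insert x Y ∧ G.Adj u (if u ∈ NY then fY u else x)
      by_cases huN : u ∈ NY
      · have huD : u ∈ DY := Finset.mem_sdiff.2 ⟨huN, fun h => hu2 (Finset.mem_insert_of_mem h)⟩
        rw [if_pos huN]
        exact ⟨Finset.mem_insert_of_mem (hfY u huD).1, (hfY u huD).2⟩
      · rw [if_neg huN]
        rw [mem_closedNbhd] at hu1
        rcases hu1 with h | ⟨s, hs, hadj⟩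
        · exact absurd h hu2
        · rw [Finset.mem_insert] at hs
          rcases hs with heq | hs
          · rw [heq] at hadj
            exact ⟨Finset.mem_insert_self _ Y, hadj⟩
          · exact absurd ((mem_closedNbhd G).2 (Or.inr ⟨s, hs, hadj⟩)) huN
  · -- all vertices of C are bad: derive a contradiction
    exfalso
    push_neg at hgood
    have hbad : ∀ x ∈ C, ∀ w : V, ∃ z, G.Adj x z ∧ z ∉ NY ∧ z ≠ w := by
      intro x hx w
      obtain ⟨u, v, hu1, hu2, hv1, hv2, huv⟩ := hgood x hx
      by_cases h : u = w
      · exact ⟨v, hv1, hv2, fun hvw => huv (h ▸ hvw ▸ rfl)⟩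
      · exact ⟨u, hu1, hu2, h⟩
    -- membership helpers
    have hCmem : ∀ x, x ∈ C ↔ x ∈ X ∧ x ∉ NY := by
      intro x; rw [hC, Finset.mem_sdiff]
    have hDXnbr : ∀ {x z : V}, x ∈ X → G.Adj x z → z ∈ DX := by
      intro x z hx hadj
      refine Finset.mem_sdiff.2 ⟨(mem_closedNbhd G).2 (Or.inr ⟨x, hx, hadj.symm⟩), ?_⟩
      intro hzX
      exact hXs z hzX x hx hadj.symm
    let step : V → V := fun u =>
      if h : ∃ z, G.Adj (fX u) z ∧ z ∉ NY ∧ z ≠ u then h.choose else u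
    obtain ⟨x₀, hx₀⟩ := hCne
    obtain ⟨u₀, hu₀a, hu₀n, _⟩ := hbad x₀ hx₀ x₀
    let useq : ℕ → V := fun k => step^[k] u₀
    have hstep : ∀ k, useq (k+1) = step (useq k) := by
      intro k
      simp only [useq, Function.iterate_succ_apply']
    have hu₀DX : u₀ ∈ DX := hDXnbr ((hCmem x₀).1 hx₀).1 hu₀a
    -- one step preserves the phase-1 invariant
    have honestep : ∀ u, u ∈ DX → u ∉ NY → fX u ∉ NY →
        step u ∈ DX ∧ step u ∉ NY ∧ G.Adj (fX u) (step u) ∧ step u ≠ u := by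
      intro u hu1 hu2 hu3
      have hfXu : fX u ∈ X := (hfX u hu1).1
      have hfXC : fX u ∈ C := (hCmem _).2 ⟨hfXu, hu3⟩
      obtain ⟨z, hz1, hz2, hz3⟩ := hbad (fX u) hfXC u
      have h : ∃ z, G.Adj (fX u) z ∧ z ∉ NY ∧ z ≠ u := ⟨z, hz1, hz2, hz3⟩
      have hspec := h.choose_spec
      simp only [step, dif_pos h]
      exact ⟨hDXnbr hfXu hspec.1, hspec.2.1, hspec.1, hspec.2.2⟩
    by_cases hph : ∃ k, (∀ l, l < k → useq l ∈ DX ∧ useq l ∉ NY ∧ fX (useq l) ∉ NY) ∧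
        useq k ∈ DX ∧ useq k ∉ NY ∧ fX (useq k) ∈ NY
    · -- phase 2 : pure pigeonhole via injectivity
      obtain ⟨k, _, hkDX, hkNY, hkf⟩ := hph
      set y₀ := useq k with hy₀
      -- the alternating sequence
      let c : ℕ → V := fun j => (fun t => fY (fX t))^[j] y₀
      have hcstep : ∀ j, c (j+1) = fY (fX (c j)) := by
        intro j
        simp only [c, Function.iterate_succ_apply']
      have hc0 : c 0 = y₀ := rfl
      have hQ : ∀ j, c j ∈ DX ∧ fX (c j) ∈ DY ∧ (1 ≤ j → c j ∈ Y) := by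
        intro j
        induction j with
        | zero =>
          refine ⟨hkDX, ?_, by omega⟩
          refine Finset.mem_sdiff.2 ⟨hkf, ?_⟩
          intro hfY'
          exact hkNY ((mem_closedNbhd G).2 (Or.inr ⟨fX y₀, hfY', (hfX _ hkDX).2⟩))
        | succ n ihn =>
          obtain ⟨ih1, ih2, _⟩ := ihn
          have hcY : c (n+1) ∈ Y := by
            rw [hcstep n]
            exact (hfY _ ih2).1
          have hadj : G.Adj (fX (c n)) (c (n+1)) := by
            rw [hcstep n]
            exact (hfY _ ih2).2
          have hcDX : c (n+1) ∈ DX := hDXnbr (hfX _ ih1).1 hadj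
          refine ⟨hcDX, ?_, fun _ => hcY⟩
          have hfXc : fX (c (n+1)) ∈ X := (hfX _ hcDX).1
          refine Finset.mem_sdiff.2 ⟨(mem_closedNbhd G).2
            (Or.inr ⟨c (n+1), hcY, ((hfX _ hcDX).2).symm⟩), ?_⟩
          intro hmem
          exact hYs _ hmem _ hcY ((hfX _ hcDX).2).symm
      -- c is injective
      have hcinj : ∀ j d : ℕ, c j = c (j + d + 1) → False := by
        intro j
        induction j with
        | zero =>
          intro d h
          have h1 : c (0 + d + 1) ∈ Y := (hQ (0+d+1)).2.2 (by omega)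
          rw [← h, hc0] at h1
          exact hkNY (subset_closedNbhd G Y h1)
        | succ n ihn =>
          intro d h
          rw [hcstep n, show n + 1 + d + 1 = (n + d + 1) + 1 by omega,
            hcstep (n + d + 1)] at h
          have h2 : fX (c n) = fX (c (n + d + 1)) :=
            hYinj (by exact_mod_cast (hQ n).2.1) (by exact_mod_cast (hQ (n+d+1)).2.1) h
          have h3 : c n = c (n + d + 1) :=
            hXinj (by exact_mod_cast (hQ n).1) (by exact_mod_cast (hQ (n+d+1)).1) h2
          exact ihn d h3
      obtain ⟨a, b, hab, heq⟩ := Finite.exists_ne_map_eq_of_infinite c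
      rcases lt_or_gt_of_ne hab with h | h
      · exact hcinj a (b - a - 1) (by rw [show a + (b - a - 1) + 1 = b by omega]; exact heq)
      · exact hcinj b (a - b - 1) (by rw [show b + (a - b - 1) + 1 = a by omega]; exact heq.symm)
    · -- phase 1 forever : even cycle contradiction
      have hinv : ∀ k, useq k ∈ DX ∧ useq k ∉ NY ∧ fX (useq k) ∉ NY := by
        intro k
        induction k using Nat.strong_induction_on with
        | _ k ih =>
          have hbase : useq k ∈ DX ∧ useq k ∉ NY := by
            cases k with
            | zero => exact ⟨hu₀DX, hu₀n⟩
            | succ n =>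
              obtain ⟨h1, h2, h3⟩ := ih n (by omega)
              rw [hstep n]
              obtain ⟨g1, g2, _, _⟩ := honestep (useq n) h1 h2 h3
              exact ⟨g1, g2⟩
          exact ⟨hbase.1, hbase.2,
            fun hcon => hph ⟨k, fun l hl => ih l hl, hbase.1, hbase.2, hcon⟩⟩
      refine chase_contra G hodd (↑(DX \ NY)) ↑X ?_ useq (fun k => fX (useq k))
        ?_ ?_ ?_ ?_ ?_ ?_
      · intro a ha b hb hab
        subst hab
        rw [Finset.mem_coe, Finset.mem_sdiff, hDX, Finset.mem_sdiff] at ha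
        exact ha.1.2 hb
      · intro k
        exact_mod_cast Finset.mem_sdiff.2 ⟨(hinv k).1, (hinv k).2.1⟩
      · intro k
        exact_mod_cast (hfX _ (hinv k).1).1
      · intro k
        exact (hfX _ (hinv k).1).2
      · intro k
        rw [hstep k]
        exact (honestep _ (hinv k).1 (hinv k).2.1 (hinv k).2.2).2.2.1
      · intro k
        rw [hstep k]
        exact (honestep _ (hinv k).1 (hinv k).2.1 (hinv k).2.2).2.2.2
      · intro k l heq
        have h := hXinj (by exact_mod_cast (hinv k).1) (by exact_mod_cast (hinv l).1) heq
        rw [hstep k, hstep l, h]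
end Exchange



section Forward
variable [Fintype V] [DecidableEq V] (G : SimpleGraph V) [DecidableRel G.Adj]

/-- Extending a matching function through a "good" vertex. -/
lemma match_insert_of_good {Y : Finset V} {x : V}
    (hYs : StableSet G Y) (hxNY : x ∉ closedNbhd G Y)
    (hgood : ∀ u v : V, G.Adj x u → u ∉ closedNbhd G Y → G.Adj x v →
      v ∉ closedNbhd G Y → u = v)
    (hM : MatchProp G Y) : MatchProp G (insert x Y) := by
  classical
  obtain ⟨fY, hYinj, hfY⟩ := hM
  set NY := closedNbhd G Y with hNY
  set DY := closedNbhd G Y \ Y with hDY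
  refine ⟨fun u => if u ∈ NY then fY u else x, ?_, ?_⟩
  · intro a ha b hb hab
    replace hab : (if a ∈ NY then fY a else x) = (if b ∈ NY then fY b else x) := hab
    simp only [Finset.coe_sdiff, Set.mem_diff, Finset.mem_coe] at ha hb
    obtain ⟨ha1, ha2⟩ := ha
    obtain ⟨hb1, hb2⟩ := hb
    have hmem : ∀ t, t ∈ closedNbhd G (insert x Y) → t ∉ insert x Y → t ∉ NY →
        G.Adj t x := by
      intro t ht1 ht2 ht3
      rw [mem_closedNbhd] at ht1
      rcases ht1 with h | ⟨s, hs, hadj⟩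
      · exact absurd h ht2
      · rw [Finset.mem_insert] at hs
        rcases hs with rfl | hs
        · exact hadj
        · exact absurd ((mem_closedNbhd G).2 (Or.inr ⟨s, hs, hadj⟩)) ht3
    by_cases haN : a ∈ NY <;> by_cases hbN : b ∈ NY
    · have haD : a ∈ DY := Finset.mem_sdiff.2 ⟨haN, fun h => ha2 (Finset.mem_insert_of_mem h)⟩
      have hbD : b ∈ DY := Finset.mem_sdiff.2 ⟨hbN, fun h => hb2 (Finset.mem_insert_of_mem h)⟩
      rw [if_pos haN, if_pos hbN] at hab
      exact hYinj (by exact_mod_cast haD) (by exact_mod_cast hbD) hab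
    · exfalso
      rw [if_pos haN, if_neg hbN] at hab
      have haD : a ∈ DY := Finset.mem_sdiff.2 ⟨haN, fun h => ha2 (Finset.mem_insert_of_mem h)⟩
      exact hxNY (hab ▸ subset_closedNbhd G Y (hfY a haD).1)
    · exfalso
      rw [if_neg haN, if_pos hbN] at hab
      have hbD : b ∈ DY := Finset.mem_sdiff.2 ⟨hbN, fun h => hb2 (Finset.mem_insert_of_mem h)⟩
      exact hxNY (hab ▸ subset_closedNbhd G Y (hfY b hbD).1)
    · have hax : G.Adj a x := hmem a ha1 ha2 haN
      have hbx : G.Adj b x := hmem b hb1 hb2 hbN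
      exact hgood a b hax.symm haN hbx.symm hbN
  · intro u hu
    rw [Finset.mem_sdiff] at hu
    obtain ⟨hu1, hu2⟩ := hu
    show (if u ∈ NY then fY u else x) ∈ insert x Y ∧ G.Adj u (if u ∈ NY then fY u else x)
    by_cases huN : u ∈ NY
    · have huD : u ∈ DY := Finset.mem_sdiff.2 ⟨huN, fun h => hu2 (Finset.mem_insert_of_mem h)⟩
      rw [if_pos huN]
      exact ⟨Finset.mem_insert_of_mem (hfY u huD).1, (hfY u huD).2⟩
    · rw [if_neg huN]
      rw [mem_closedNbhd] at hu1
      rcases hu1 with h | ⟨s, hs, hadj⟩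
      · exact absurd h hu2
      · rw [Finset.mem_insert] at hs
        rcases hs with heq | hs
        · rw [heq] at hadj
          exact ⟨Finset.mem_insert_self _ Y, hadj⟩
        · exact absurd ((mem_closedNbhd G).2 (Or.inr ⟨s, hs, hadj⟩)) huN

lemma match_empty : MatchProp G (∅ : Finset V) := by
  refine ⟨id, ?_, ?_⟩
  · have : closedNbhd G (∅ : Finset V) \ ∅ = ∅ := by simp [closedNbhd]
    rw [this]
    simp
  · intro u hu
    have : closedNbhd G (∅ : Finset V) \ ∅ = ∅ := by simp [closedNbhd]
    rw [this] at hu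
    simp at hu

theorem psi_match_of_accessible
    (htri : ∀ ⦃x u v : V⦄, G.Adj x u → G.Adj x v → G.Adj u v → False)
    (hacc : Accessible (Psi G)) : ∀ S ∈ Psi G, MatchProp G S := by
  classical
  have key : ∀ n : ℕ, ∀ S : Finset V, S.card ≤ n → S ∈ Psi G → MatchProp G S := by
    intro n
    induction n with
    | zero =>
      intro S hcard _
      have : S = ∅ := Finset.card_eq_zero.1 (by omega)
      rw [this]
      exact match_empty G
    | succ n ih =>
      intro S hcard hS
      rcases Finset.eq_empty_or_nonempty S with rfl | hne
      · exact match_empty G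
      obtain ⟨x, hxS, hS'⟩ := hacc S hS hne
      set S' := S.erase x with hS'def
      have hins : insert x S' = S := Finset.insert_erase hxS
      have hcard' : S'.card ≤ n := by
        have h1 : S'.card = S.card - 1 := Finset.card_erase_of_mem hxS
        have h2 : 0 < S.card := Finset.card_pos.2 hne
        omega
      have hM' : MatchProp G S' := ih S' hcard' hS'
      have hSs : StableSet G S := hS.1
      have hxS' : x ∉ S' := Finset.notMem_erase x S
      have hxNY : x ∉ closedNbhd G S' := by
        rw [mem_closedNbhd]
        rintro (h | ⟨s, hs, hadj⟩)
        · exact hxS' h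
        · exact hSs x hxS s (Finset.mem_of_mem_erase hs) hadj
      have hgood : ∀ u v : V, G.Adj x u → u ∉ closedNbhd G S' → G.Adj x v →
          v ∉ closedNbhd G S' → u = v := by
        intro u v hxu huN hxv hvN
        by_contra hne2
        -- S' ∪ {u, v} is a stable subset of N[S] of size |S| + 1
        have huS' : u ∉ S' := fun h => huN (subset_closedNbhd G S' h)
        have hvS' : v ∉ S' := fun h => hvN (subset_closedNbhd G S' h)
        have hTstable : StableSet G (insert u (insert v S')) := by
          intro a ha b hb
          rw [Finset.mem_insert, Finset.mem_insert] at ha hb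
          have hnadj : ∀ t, t ∉ closedNbhd G S' → ∀ s ∈ S', ¬ G.Adj t s :=
            fun t ht s hs hadj => ht ((mem_closedNbhd G).2 (Or.inr ⟨s, hs, hadj⟩))
          rcases ha with rfl | rfl | ha <;> rcases hb with rfl | rfl | hb
          · exact G.loopless.irrefl _
          · exact fun h => htri hxu hxv h
          · exact hnadj _ huN _ hb
          · exact fun h => htri hxv hxu h
          · exact G.loopless.irrefl _
          · exact hnadj _ hvN _ hb
          · exact fun h => (hnadj _ huN _ ha) h.symm
          · exact fun h => (hnadj _ hvN _ ha) h.symm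
          · exact hSs a (Finset.mem_of_mem_erase ha) b (Finset.mem_of_mem_erase hb)
        have hTsub : insert u (insert v S') ⊆ closedNbhd G S := by
          intro t ht
          rw [Finset.mem_insert, Finset.mem_insert] at ht
          rcases ht with rfl | rfl | ht
          · exact (mem_closedNbhd G).2 (Or.inr ⟨x, hxS, hxu.symm⟩)
          · exact (mem_closedNbhd G).2 (Or.inr ⟨x, hxS, hxv.symm⟩)
          · exact subset_closedNbhd G S (Finset.mem_of_mem_erase ht)
        have hTcard : (insert u (insert v S')).card = S.card + 1 := by
          rw [Finset.card_insert_of_notMem, Finset.card_insert_of_notMem hvS',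
            ← hins, Finset.card_insert_of_notMem hxS']
          rw [Finset.mem_insert]
          push_neg
          exact ⟨hne2, huS'⟩
        have := hS.2 _ hTsub hTstable
        omega
      have := match_insert_of_good G (stableSet_mono G (Finset.erase_subset x S) hSs)
        hxNY hgood hM'
      rwa [hins] at this
  exact fun S hS => key S.card S le_rfl hS
end Forward



section MuAlpha
variable {W : Type*} [Fintype W] [DecidableEq W] (K : SimpleGraph W)

lemma edge_eq_of_mem {M : K.Subgraph} (hm : M.IsMatching) {e e' : Sym2 W} {w : W}
    (he : e ∈ M.edgeSet) (he' : e' ∈ M.edgeSet) (hw : w ∈ e) (hw' : w ∈ e') :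
    e = e' := by
  have h1 : M.Adj w (Sym2.Mem.other hw) := by
    rw [← SimpleGraph.Subgraph.mem_edgeSet, Sym2.other_spec hw]
    exact he
  have h2 : M.Adj w (Sym2.Mem.other hw') := by
    rw [← SimpleGraph.Subgraph.mem_edgeSet, Sym2.other_spec hw']
    exact he'
  obtain ⟨z, hz, huniq⟩ := hm (M.edge_vert h1)
  have e1 : Sym2.Mem.other hw = z := huniq _ h1
  have e2 : Sym2.Mem.other hw' = z := huniq _ h2
  rw [← Sym2.other_spec hw, ← Sym2.other_spec hw', e1, e2]

lemma matching_stable_bound {M : K.Subgraph} (hm : M.IsMatching)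
    {A : Finset W} (hA : StableSet K A) :
    M.edgeSet.ncard + A.card ≤ Fintype.card W := by
  classical
  have hex : ∀ e : M.edgeSet, ∃ w, w ∈ (e : Sym2 W) ∧ w ∈ Finset.univ \ A := by
    rintro ⟨e, he⟩
    induction e with
    | _ u v =>
      have hadj : M.Adj u v := (SimpleGraph.Subgraph.mem_edgeSet).1 he
      have hKadj : K.Adj u v := M.adj_sub hadj
      by_cases hu : u ∈ A
      · by_cases hv : v ∈ A
        · exact absurd hKadj (hA u hu v hv)
        · exact ⟨v, by simp, by simp [hv]⟩
      · exact ⟨u, by simp, by simp [hu]⟩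
  let φ : M.edgeSet → (Finset.univ \ A : Finset W) :=
    fun e => ⟨(hex e).choose, (hex e).choose_spec.2⟩
  have hφmem : ∀ e : M.edgeSet, (φ e : W) ∈ (e : Sym2 W) := fun e => (hex e).choose_spec.1
  have hφinj : Function.Injective φ := by
    intro e e' heq
    have h1 : (φ e : W) ∈ (e : Sym2 W) := hφmem e
    have h2 : (φ e : W) ∈ (e' : Sym2 W) := by
      rw [heq]; exact hφmem e'
    exact Subtype.ext (edge_eq_of_mem K hm e.2 e'.2 h1 h2)
  have hcard : M.edgeSet.ncard ≤ (Finset.univ \ A).card := by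
    have h1 := Nat.card_le_card_of_injective φ hφinj
    rw [Nat.card_coe_set_eq] at h1
    rwa [Nat.card_eq_fintype_card, Fintype.card_coe] at h1
  have h2 : (Finset.univ \ A).card = Fintype.card W - A.card := by
    rw [Finset.card_sdiff_of_subset (Finset.subset_univ A), Finset.card_univ]
  have h3 : A.card ≤ Fintype.card W := by
    rw [← Finset.card_univ]
    exact Finset.card_le_card (Finset.subset_univ A)
  omega

lemma matching_extract {M : K.Subgraph} (hm : M.IsMatching)
    {A : Finset W} (hA : StableSet K A)
    (hcard : M.edgeSet.ncard + A.card = Fintype.card W) :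
    ∃ f : W → W, Set.InjOn f ↑(Finset.univ \ A) ∧
      ∀ u ∈ Finset.univ \ A, f u ∈ A ∧ K.Adj u (f u) := by
  classical
  have hex : ∀ e : M.edgeSet, ∃ w, w ∈ (e : Sym2 W) ∧ w ∈ Finset.univ \ A := by
    rintro ⟨e, he⟩
    induction e with
    | _ u v =>
      have hadj : M.Adj u v := (SimpleGraph.Subgraph.mem_edgeSet).1 he
      have hKadj : K.Adj u v := M.adj_sub hadj
      by_cases hu : u ∈ A
      · by_cases hv : v ∈ A
        · exact absurd hKadj (hA u hu v hv)
        · exact ⟨v, by simp, by simp [hv]⟩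
      · exact ⟨u, by simp, by simp [hu]⟩
  let φ : M.edgeSet → (Finset.univ \ A : Finset W) :=
    fun e => ⟨(hex e).choose, (hex e).choose_spec.2⟩
  have hφmem : ∀ e : M.edgeSet, (φ e : W) ∈ (e : Sym2 W) := fun e => (hex e).choose_spec.1
  have hφinj : Function.Injective φ := by
    intro e e' heq
    have h1 : (φ e : W) ∈ (e : Sym2 W) := hφmem e
    have h2 : (φ e : W) ∈ (e' : Sym2 W) := by
      rw [heq]; exact hφmem e'
    exact Subtype.ext (edge_eq_of_mem K hm e.2 e'.2 h1 h2)
  have hφsurj : Function.Surjective φ := by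
    have hcards : Fintype.card M.edgeSet = Fintype.card (Finset.univ \ A : Finset W) := by
      have h1 : Fintype.card M.edgeSet = M.edgeSet.ncard := by
        rw [← Nat.card_eq_fintype_card, Nat.card_coe_set_eq]
      have h2 : Fintype.card (Finset.univ \ A : Finset W) = Fintype.card W - A.card := by
        rw [Fintype.card_coe, Finset.card_sdiff_of_subset (Finset.subset_univ A), Finset.card_univ]
      have h3 : A.card ≤ Fintype.card W := by
        rw [← Finset.card_univ]
        exact Finset.card_le_card (Finset.subset_univ A)
      omega
    exact ((Fintype.bijective_iff_injective_and_card φ).2 ⟨hφinj, hcards⟩).2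
  -- every vertex outside A is matched to a vertex of A
  have hcover : ∀ w : W, w ∉ A → ∃ z, M.Adj w z ∧ z ∈ A := by
    intro w hw
    obtain ⟨e, he⟩ := hφsurj ⟨w, by simp [hw]⟩
    have hwmem : w ∈ (e : Sym2 W) := by
      have := hφmem e
      rw [he] at this
      exact this
    have hadj : M.Adj w (Sym2.Mem.other hwmem) := by
      rw [← SimpleGraph.Subgraph.mem_edgeSet, Sym2.other_spec hwmem]
      exact e.2
    set z := Sym2.Mem.other hwmem with hzdef
    refine ⟨z, hadj, ?_⟩
    by_contra hzA
    obtain ⟨e', he'⟩ := hφsurj ⟨z, by simp [hzA]⟩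
    have hzmem : z ∈ (e' : Sym2 W) := by
      have := hφmem e'
      rw [he'] at this
      exact this
    have hze : z ∈ (e : Sym2 W) := by
      rw [← Sym2.other_spec hwmem]
      exact Sym2.mem_mk_right w z
    have hee : e' = e := Subtype.ext (edge_eq_of_mem K hm e'.2 e.2 hzmem hze)
    rw [hee] at he'
    have h2 := he.symm.trans he'
    exact (M.adj_sub hadj).ne (congrArg Subtype.val h2)
  let f : W → W := fun w => if h : ∃ z, M.Adj w z ∧ z ∈ A then h.choose else w
  have hfspec : ∀ w : W, w ∉ A → M.Adj w (f w) ∧ f w ∈ A := by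
    intro w hw
    obtain ⟨z, hz1, hz2⟩ := hcover w hw
    have h : ∃ z, M.Adj w z ∧ z ∈ A := ⟨z, hz1, hz2⟩
    simp only [f, dif_pos h]
    exact h.choose_spec
  refine ⟨f, ?_, ?_⟩
  · intro a ha b hb hab
    simp only [Finset.coe_sdiff, Set.mem_diff, Finset.mem_coe] at ha hb
    have ha' := hfspec a (fun h => ha.2 h)
    have hb' := hfspec b (fun h => hb.2 h)
    obtain ⟨y, hy, huniq⟩ := hm (M.edge_vert ha'.1.symm)
    have e1 : a = y := huniq a ha'.1.symm
    have hba : M.Adj b (f a) := by rw [hab]; exact hb'.1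
    have e2 : b = y := huniq b hba.symm
    exact e1.trans e2.symm
  · intro u hu
    rw [Finset.mem_sdiff] at hu
    have := hfspec u hu.2
    exact ⟨this.2, M.adj_sub this.1⟩

lemma matching_of_injection {A D : Finset W} (hD : D = Finset.univ \ A)
    (f : W → W) (hinj : Set.InjOn f ↑D)
    (hf : ∀ u ∈ D, f u ∈ A ∧ K.Adj u (f u)) :
    ∃ M : K.Subgraph, M.IsMatching ∧ M.edgeSet.ncard = D.card := by
  classical
  have hDA : ∀ {u : W}, u ∈ D → u ∉ A := by
    intro u hu
    rw [hD, Finset.mem_sdiff] at hu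
    exact hu.2
  let M : K.Subgraph :=
    { verts := ↑D ∪ (f '' ↑D),
      Adj := fun u v => (u ∈ D ∧ f u = v) ∨ (v ∈ D ∧ f v = u),
      adj_sub := by
        rintro u v (⟨hu, rfl⟩ | ⟨hv, rfl⟩)
        · exact (hf u hu).2
        · exact ((hf v hv).2).symm
      edge_vert := by
        rintro u v (⟨hu, _⟩ | ⟨hv, rfl⟩)
        · exact Or.inl (Finset.mem_coe.2 hu)
        · exact Or.inr ⟨v, Finset.mem_coe.2 hv, rfl⟩
      symm := ⟨by
        rintro u v (⟨hu, rfl⟩ | ⟨hv, rfl⟩)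
        · exact Or.inr ⟨hu, rfl⟩
        · exact Or.inl ⟨hv, rfl⟩⟩ }
  have hMadj : ∀ u v, M.Adj u v ↔ (u ∈ D ∧ f u = v) ∨ (v ∈ D ∧ f v = u) := by
    intro u v
    rfl
  refine ⟨M, ?_, ?_⟩
  · rintro v (hv | ⟨u₀, hu₀, rfl⟩)
    · rw [Finset.mem_coe] at hv
      refine ⟨f v, Or.inl ⟨hv, rfl⟩, ?_⟩
      intro y hy
      rcases (hMadj v y).1 hy with ⟨_, rfl⟩ | ⟨hy2, heq⟩
      · rfl
      · rw [← heq] at hv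
        exact ((hDA hv) ((hf y hy2).1)).elim
    · rw [Finset.mem_coe] at hu₀
      refine ⟨u₀, Or.inr ⟨hu₀, rfl⟩, ?_⟩
      intro y hy
      rcases (hMadj _ y).1 hy with ⟨hfu, _⟩ | ⟨hy2, heq⟩
      · exact ((hDA hfu) ((hf u₀ hu₀).1)).elim
      · exact hinj (Finset.mem_coe.2 hy2) (Finset.mem_coe.2 hu₀) heq
  · have hedge : M.edgeSet = (fun u => s(u, f u)) '' ↑D := by
      ext e
      induction e with
      | _ u v =>
        rw [SimpleGraph.Subgraph.mem_edgeSet, hMadj]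
        simp only [Set.mem_image, Finset.mem_coe]
        constructor
        · rintro (⟨hu, rfl⟩ | ⟨hv, rfl⟩)
          · exact ⟨u, hu, rfl⟩
          · exact ⟨v, hv, Sym2.eq_swap⟩
        · rintro ⟨a, ha, hae⟩
          rw [Sym2.eq_iff] at hae
          rcases hae with ⟨rfl, rfl⟩ | ⟨rfl, rfl⟩
          · exact Or.inl ⟨ha, rfl⟩
          · exact Or.inr ⟨ha, rfl⟩
    rw [hedge, Set.ncard_image_of_injOn, Set.ncard_coe_finset]
    intro a ha b hb hab
    rw [Sym2.eq_iff] at hab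
    rcases hab with ⟨h1, _⟩ | ⟨h1, h2⟩
    · exact h1
    · rw [Finset.mem_coe] at ha hb
      exact (((h1 ▸ hDA ha) ((hf b hb).1))).elim
end MuAlpha

set_option maxHeartbeats 1000000


section Pointwise
variable [Fintype V] [DecidableEq V] (G : SimpleGraph V) [DecidableRel G.Adj]

theorem ke_iff_match {S : Finset V} (hS : S ∈ Psi G) :
    KonigEgervary (G.induce ↑(closedNbhd G S)) ↔ MatchProp G S := by
  classical
  set H := closedNbhd G S with hH
  set K := G.induce (↑H : Set V) with hK
  have hSs : StableSet G S := hS.1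
  have hSH : S ⊆ H := subset_closedNbhd G S
  set A₀ : Finset (↑H : Set V) := Finset.univ.filter (fun a => (a : V) ∈ S) with hA₀
  have hA₀mem : ∀ a : (↑H : Set V), a ∈ A₀ ↔ (a : V) ∈ S := by
    intro a
    simp [hA₀]
  have hA₀card : A₀.card = S.card := by
    refine Finset.card_bij (fun a _ => (a : V)) ?_ ?_ ?_
    · intro a ha
      exact (hA₀mem a).1 ha
    · intro a _ b _ hab
      exact Subtype.ext hab
    · intro s hs
      exact ⟨⟨s, Finset.mem_coe.2 (hSH hs)⟩, (hA₀mem _).2 hs, rfl⟩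
  have hA₀stable : StableSet K A₀ := by
    intro a ha b hb hadj
    exact hSs _ ((hA₀mem a).1 ha) _ ((hA₀mem b).1 hb) (SimpleGraph.comap_adj.1 hadj)
  have hup : ∀ T : Finset (↑H : Set V), StableSet K T →
      T.image Subtype.val ⊆ H ∧ StableSet G (T.image Subtype.val) ∧
      (T.image Subtype.val).card = T.card := by
    intro T hT
    refine ⟨?_, ?_, Finset.card_image_of_injective T Subtype.val_injective⟩
    · intro v hv
      rw [Finset.mem_image] at hv
      obtain ⟨a, _, rfl⟩ := hv
      exact Finset.mem_coe.1 a.2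
    · intro x hx y hy hadj
      rw [Finset.mem_image] at hx hy
      obtain ⟨a, haT, rfl⟩ := hx
      obtain ⟨b, hbT, rfl⟩ := hy
      exact hT a haT b hbT (SimpleGraph.comap_adj.2 hadj)
  have halpha : alphaNum K = S.card := by
    have hmem : S.card ∈ {n | ∃ T : Finset (↑H : Set V), StableSet K T ∧ T.card = n} :=
      ⟨A₀, hA₀stable, hA₀card⟩
    have hub : ∀ n ∈ {n | ∃ T : Finset (↑H : Set V), StableSet K T ∧ T.card = n},
        n ≤ S.card := by
      rintro n ⟨T, hT, rfl⟩
      obtain ⟨h1, h2, h3⟩ := hup T hT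
      have := hS.2 _ h1 h2
      omega
    exact le_antisymm (csSup_le ⟨S.card, hmem⟩ hub) (le_csSup ⟨S.card, hub⟩ hmem)
  have hn : Fintype.card (↑H : Set V) = H.card := by
    rw [← Fintype.card_coe H]
    exact Fintype.card_congr (Equiv.subtypeEquivRight (fun x => Finset.mem_coe))
  have hcardS : S.card ≤ H.card := Finset.card_le_card hSH
  have hbdd : BddAbove {n | ∃ M : K.Subgraph, M.IsMatching ∧ M.edgeSet.ncard = n} := by
    refine ⟨Fintype.card (↑H : Set V), ?_⟩
    rintro n ⟨M, hM, rfl⟩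
    have := matching_stable_bound K hM (A := ∅) (fun x hx => by simp at hx)
    simpa using this
  have hne0 : (0 : ℕ) ∈ {n | ∃ M : K.Subgraph, M.IsMatching ∧ M.edgeSet.ncard = n} := by
    refine ⟨⊥, ?_, by simp⟩
    intro v hv
    simp [SimpleGraph.Subgraph.verts_bot] at hv
  have hmuub : ∀ n ∈ {n | ∃ M : K.Subgraph, M.IsMatching ∧ M.edgeSet.ncard = n},
      n ≤ Fintype.card (↑H : Set V) - S.card := by
    rintro n ⟨M, hM, rfl⟩
    have h1 := matching_stable_bound K hM hA₀stable
    rw [hA₀card] at h1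
    omega
  have hmu_le : muNum K ≤ Fintype.card (↑H : Set V) - S.card :=
    csSup_le ⟨0, hne0⟩ hmuub
  have hD₀card : (Finset.univ \ A₀).card = Fintype.card (↑H : Set V) - S.card := by
    rw [Finset.card_sdiff_of_subset (Finset.subset_univ A₀), Finset.card_univ, hA₀card]
  constructor
  · -- KE → Match
    intro hKE
    have heq : alphaNum K + muNum K = Fintype.card (↑H : Set V) := hKE
    rw [halpha] at heq
    obtain ⟨M, hM, hMcard⟩ : ∃ M : K.Subgraph, M.IsMatching ∧
        M.edgeSet.ncard = muNum K := Nat.sSup_mem ⟨0, hne0⟩ hbdd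
    have hMcard' : M.edgeSet.ncard + A₀.card = Fintype.card (↑H : Set V) := by
      rw [hMcard, hA₀card]
      omega
    obtain ⟨F, hFinj, hF⟩ := matching_extract K hM hA₀stable hMcard'
    set f' : V → V := fun v => if h : v ∈ H then (if v ∈ S then v else
      (F ⟨v, Finset.mem_coe.2 h⟩ : V)) else v with hf'def
    have hmemA : ∀ (v : V) (h1 : v ∈ H), v ∉ S →
        (⟨v, Finset.mem_coe.2 h1⟩ : (↑H : Set V)) ∈ Finset.univ \ A₀ := by
      intro v h1 h2
      rw [Finset.mem_sdiff]
      refine ⟨Finset.mem_univ _, ?_⟩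
      rw [hA₀mem]
      exact h2
    refine ⟨f', ?_, ?_⟩
    · intro a ha b hb hab
      rw [Finset.coe_sdiff, Set.mem_diff, Finset.mem_coe, Finset.mem_coe] at ha hb
      obtain ⟨ha1, ha2⟩ := ha
      obtain ⟨hb1, hb2⟩ := hb
      simp only [hf'def] at hab
      rw [dif_pos ha1, dif_pos hb1, if_neg ha2, if_neg hb2] at hab
      have := hFinj (Finset.mem_coe.2 (hmemA a ha1 ha2)) (Finset.mem_coe.2 (hmemA b hb1 hb2))
        (Subtype.ext hab)
      exact congrArg Subtype.val this
    · intro u hu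
      rw [Finset.mem_sdiff] at hu
      obtain ⟨hu1, hu2⟩ := hu
      simp only [hf'def]
      rw [dif_pos hu1, if_neg hu2]
      obtain ⟨hFA, hFadj⟩ := hF _ (hmemA u hu1 hu2)
      exact ⟨(hA₀mem _).1 hFA, SimpleGraph.comap_adj.1 hFadj⟩
  · -- Match → KE
    intro hM
    obtain ⟨f, hinj, hf⟩ := hM
    have hfH : ∀ (u : V), u ∈ H → u ∉ S → f u ∈ H := by
      intro u h1 h2
      exact hSH (hf u (Finset.mem_sdiff.2 ⟨h1, h2⟩)).1
    set F : (↑H : Set V) → (↑H : Set V) := fun u =>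
      if h : (u : V) ∈ S then u else
        ⟨f u, Finset.mem_coe.2 (hfH u (Finset.mem_coe.1 u.2) h)⟩ with hF
    have hFval : ∀ (u : (↑H : Set V)), (u : V) ∉ S → (F u : V) = f u := by
      intro u hu
      simp only [hF, dif_neg hu]
    have hFdom : ∀ u ∈ Finset.univ \ A₀, F u ∈ A₀ ∧ K.Adj u (F u) := by
      intro u hu
      rw [Finset.mem_sdiff] at hu
      have huS : (u : V) ∉ S := fun h => hu.2 ((hA₀mem u).2 h)
      have huD : (u : V) ∈ H \ S :=
        Finset.mem_sdiff.2 ⟨Finset.mem_coe.1 u.2, huS⟩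
      constructor
      · rw [hA₀mem, hFval u huS]
        exact (hf _ huD).1
      · refine SimpleGraph.comap_adj.2 ?_
        show G.Adj (u : V) ((F u : V))
        rw [hFval u huS]
        exact (hf _ huD).2
    have hFinj : Set.InjOn F ↑(Finset.univ \ A₀) := by
      intro a ha b hb hab
      rw [Finset.mem_coe, Finset.mem_sdiff] at ha hb
      have haS : (a : V) ∉ S := fun h => ha.2 ((hA₀mem a).2 h)
      have hbS : (b : V) ∉ S := fun h => hb.2 ((hA₀mem b).2 h)
      have h1 : f a = f b := by
        rw [← hFval a haS, ← hFval b hbS, hab]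
      have haD : (a : V) ∈ closedNbhd G S \ S :=
        Finset.mem_sdiff.2 ⟨Finset.mem_coe.1 a.2, haS⟩
      have hbD : (b : V) ∈ closedNbhd G S \ S :=
        Finset.mem_sdiff.2 ⟨Finset.mem_coe.1 b.2, hbS⟩
      exact Subtype.ext (hinj (Finset.mem_coe.2 haD) (Finset.mem_coe.2 hbD) h1)
    obtain ⟨M, hMm, hMc⟩ := matching_of_injection K (A := A₀) (D := Finset.univ \ A₀)
      rfl F hFinj hFdom
    have hmu_ge : Fintype.card (↑H : Set V) - S.card ≤ muNum K := by
      refine le_csSup hbdd ⟨M, hMm, ?_⟩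
      rw [hMc, hD₀card]
    show alphaNum K + muNum K = Fintype.card (↑H : Set V)
    rw [halpha]
    omega
end Pointwise

/-- For a unicycle graph whose unique cycle has odd length `2q+1 ≥ 5`, Ψ(G) is a
greedoid iff the closed neighborhood of every local maximum stable set induces a
König–Egerváry graph. -/
theorem psi_odd_unicyclic_greedoid_iff [Fintype V] [DecidableEq V] (G : SimpleGraph V)
    [DecidableRel G.Adj] (huni : Unicyclic G) (q : ℕ) (hq : 2 ≤ q)
    (hlen : ∀ ⦃v : V⦄ (c : G.Walk v v), c.IsCycle → c.length = 2 * q + 1) :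
    IsGreedoid (Psi G) ↔
      ∀ S ∈ Psi G, KonigEgervary (G.induce ↑(closedNbhd G S)) := by
  have hodd : ∀ ⦃v : V⦄ (c : G.Walk v v), c.IsCycle → ¬ Even c.length := by
    intro v c hc h
    rw [hlen c hc] at h
    rcases h with ⟨r, hr⟩
    omega
  have htri : ∀ ⦃x u v : V⦄, G.Adj x u → G.Adj x v → G.Adj u v → False := by
    intro x u v hxu hxv huv
    obtain ⟨c, hc, hl⟩ := triangle_cycle G huv hxv.symm hxu
    have := hlen c hc
    omega
  constructor
  · rintro ⟨_, hacc, _⟩ S hS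
    exact (ke_iff_match G hS).2 (psi_match_of_accessible G htri hacc S hS)
  · intro hKE
    have hmatch : ∀ S ∈ Psi G, MatchProp G S :=
      fun S hS => (ke_iff_match G hS).1 (hKE S hS)
    exact ⟨⟨∅, empty_mem_psi G⟩, psi_accessible G hodd hmatch,
      psi_exchange G hodd hmatch⟩
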